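/- Let N be a natural number and, for j = 0, 1, …, N, let c_j, c̃_j, a_j, ã_j ∈ ℂ and λ_j, λ̃_j ∈ ℂ. Let C, δ, M, ε_φ, ε_λ ≥ 0 and μ, μ̃ > 0, and assume: (i) |c_j| ≤ C and |c_j − c̃_j| ≤ δ for all j; (ii) |a_j| ≤ M and |a_j − ã_j| ≤ ε_φ for all j; (iii) |λ_j − λ̃_j| ≤ ε_λ for all j; (iv) Re(λ_j) ≤ 0 and Re(λ̃_j) ≤ 0 for all j; (v) for every j with Re(λ_j) < 0 one has Re(λ_j) ≤ −μ and Re(λ̃_j) ≤ −μ̃. Then for every t ≥ 0, | Σ_{j=0}^{N} c_j a_j e^{λ_j t} − Σ_{j=0}^{N} c̃_j ã_j e^{λ̃_j t} | ≤ (N+1) ( C·M·e^{−μ t} + (C+δ)·(M+ε_φ)·e^{−μ̃ t} ) + (N+1) ( C·M·ε_λ·t + C·ε_φ + δ·(M+ε_φ) ). -/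

import Mathlib

open Finset

lemma exp_sub_exp_abs_le {z w : ℂ} (hz : z.re ≤ 0) (hw : w.re ≤ 0) :
    ‖Complex.exp z - Complex.exp w‖ ≤ ‖z - w‖ := by
  have h := Convex.norm_image_sub_le_of_norm_deriv_le
    (f := Complex.exp) (s := {u : ℂ | u.re ≤ 0}) (C := 1) (x := w) (y := z)
    (fun x _ => Complex.differentiable_exp x)
    (fun x hx => by
      rw [Complex.deriv_exp]
      simpa [Complex.norm_exp] using Real.exp_le_one_iff.2 hx)
    (convex_halfSpace_re_le 0) hw hz
  simpa using h

/-- Quantitative form of the ASK approximation error bound (Theorem 3.1):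
comparing a truncated Koopman expansion with its ASK approximation. -/
theorem ask_error_bound (N : ℕ)
    (c c' a a' l l' : Fin (N + 1) → ℂ)
    (C δ M εφ εl μ μ' : ℝ)
    (hC : 0 ≤ C) (hδ : 0 ≤ δ) (hM : 0 ≤ M) (hεφ : 0 ≤ εφ) (hεl : 0 ≤ εl)
    (hμ : 0 < μ) (hμ' : 0 < μ')
    (hc : ∀ j, ‖c j‖ ≤ C)
    (hcc : ∀ j, ‖c j - c' j‖ ≤ δ)
    (ha : ∀ j, ‖a j‖ ≤ M)
    (haa : ∀ j, ‖a j - a' j‖ ≤ εφ)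
    (hll : ∀ j, ‖l j - l' j‖ ≤ εl)
    (hl : ∀ j, (l j).re ≤ 0) (hl' : ∀ j, (l' j).re ≤ 0)
    (hneg : ∀ j, (l j).re < 0 → (l j).re ≤ -μ ∧ (l' j).re ≤ -μ') :
    ∀ t : ℝ, 0 ≤ t →
      ‖∑ j, c j * a j * Complex.exp (l j * t)
          - ∑ j, c' j * a' j * Complex.exp (l' j * t)‖
        ≤ (N + 1) * (C * M * Real.exp (-μ * t) + (C + δ) * (M + εφ) * Real.exp (-μ' * t))
          + (N + 1) * (C * M * εl * t + C * εφ + δ * (M + εφ)) := by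
  intro t ht
  set B : ℝ := C * M * Real.exp (-μ * t) + (C + δ) * (M + εφ) * Real.exp (-μ' * t)
      + (C * M * εl * t + C * εφ + δ * (M + εφ)) with hB
  have key : ∀ j : Fin (N + 1),
      ‖c j * a j * Complex.exp (l j * t) - c' j * a' j * Complex.exp (l' j * t)‖ ≤ B := by
    intro j
    have hc' : ‖c' j‖ ≤ C + δ := by
      calc ‖c' j‖ = ‖c j - (c j - c' j)‖ := by ring_nf
        _ ≤ ‖c j‖ + ‖c j - c' j‖ := by
            simpa using norm_sub_le (c j) (c j - c' j)
        _ ≤ C + δ := add_le_add (hc j) (hcc j)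
    have ha' : ‖a' j‖ ≤ M + εφ := by
      calc ‖a' j‖ = ‖a j - (a j - a' j)‖ := by ring_nf
        _ ≤ ‖a j‖ + ‖a j - a' j‖ := by
            simpa using norm_sub_le (a j) (a j - a' j)
        _ ≤ M + εφ := add_le_add (ha j) (haa j)
    have hre : ((l j) * (t : ℂ)).re = (l j).re * t := by simp [Complex.mul_re]
    have hre' : ((l' j) * (t : ℂ)).re = (l' j).re * t := by simp [Complex.mul_re]
    have hE' : ‖Complex.exp (l' j * t)‖ ≤ Real.exp (-μ' * t) ∨
        ‖Complex.exp (l' j * t)‖ ≤ 1 := by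
      right
      rw [Complex.norm_exp, hre']
      exact Real.exp_le_one_iff.2 (mul_nonpos_of_nonpos_of_nonneg (hl' j) ht)
    by_cases h : (l j).re < 0
    · obtain ⟨h1, h2⟩ := hneg j h
      have hE : ‖Complex.exp (l j * t)‖ ≤ Real.exp (-μ * t) := by
        rw [Complex.norm_exp, hre]
        exact Real.exp_le_exp.2 (mul_le_mul_of_nonneg_right h1 ht)
      have hE2 : ‖Complex.exp (l' j * t)‖ ≤ Real.exp (-μ' * t) := by
        rw [Complex.norm_exp, hre']
        exact Real.exp_le_exp.2 (mul_le_mul_of_nonneg_right h2 ht)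
      have b1 : ‖c j * a j * Complex.exp (l j * t)‖ ≤ C * M * Real.exp (-μ * t) := by
        rw [norm_mul, norm_mul]
        exact mul_le_mul (mul_le_mul (hc j) (ha j) (norm_nonneg _) hC) hE
          (norm_nonneg _) (by positivity)
      have b2 : ‖c' j * a' j * Complex.exp (l' j * t)‖
          ≤ (C + δ) * (M + εφ) * Real.exp (-μ' * t) := by
        rw [norm_mul, norm_mul]
        exact mul_le_mul (mul_le_mul hc' ha' (norm_nonneg _) (by linarith)) hE2
          (norm_nonneg _) (by positivity)
      have hsub : ‖c j * a j * Complex.exp (l j * t)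
            - c' j * a' j * Complex.exp (l' j * t)‖
          ≤ ‖c j * a j * Complex.exp (l j * t)‖
            + ‖c' j * a' j * Complex.exp (l' j * t)‖ := by
        simpa using norm_sub_le
          (c j * a j * Complex.exp (l j * ↑t)) (c' j * a' j * Complex.exp (l' j * ↑t))
      have hrest : 0 ≤ C * M * εl * t + C * εφ + δ * (M + εφ) := by positivity
      rw [hB]; linarith
    · have hre0 : (l j).re = 0 := le_antisymm (hl j) (not_lt.1 h)
      have hz : ((l j) * (t : ℂ)).re ≤ 0 := by rw [hre, hre0]; simp
      have hw : ((l' j) * (t : ℂ)).re ≤ 0 := by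
        rw [hre']; exact mul_nonpos_of_nonpos_of_nonneg (hl' j) ht
      have hEd : ‖Complex.exp (l j * t) - Complex.exp (l' j * t)‖ ≤ εl * t := by
        calc ‖Complex.exp (l j * t) - Complex.exp (l' j * t)‖
            ≤ ‖l j * t - l' j * t‖ := exp_sub_exp_abs_le hz hw
          _ = ‖l j - l' j‖ * |t| := by
              rw [← sub_mul, norm_mul, Complex.norm_real, Real.norm_eq_abs]
          _ ≤ εl * t := by rw [abs_of_nonneg ht]; exact mul_le_mul_of_nonneg_right (hll j) ht
      have hE1 : ‖Complex.exp (l' j * t)‖ ≤ 1 := by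
        rw [Complex.norm_exp]; exact Real.exp_le_one_iff.2 hw
      have split : c j * a j * Complex.exp (l j * t) - c' j * a' j * Complex.exp (l' j * t)
          = c j * a j * (Complex.exp (l j * t) - Complex.exp (l' j * t))
            + (c j * (a j - a' j) + (c j - c' j) * a' j) * Complex.exp (l' j * t) := by ring
      have b1 : ‖c j * a j * (Complex.exp (l j * t) - Complex.exp (l' j * t))‖
          ≤ C * M * (εl * t) := by
        rw [norm_mul, norm_mul]
        exact mul_le_mul (mul_le_mul (hc j) (ha j) (norm_nonneg _) hC) hEd
          (norm_nonneg _) (by positivity)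
      have b2 : ‖(c j * (a j - a' j) + (c j - c' j) * a' j) * Complex.exp (l' j * t)‖
          ≤ C * εφ + δ * (M + εφ) := by
        rw [norm_mul]
        calc ‖c j * (a j - a' j) + (c j - c' j) * a' j‖
              * ‖Complex.exp (l' j * t)‖
            ≤ (‖c j * (a j - a' j)‖ + ‖(c j - c' j) * a' j‖) * 1 :=
              mul_le_mul (norm_add_le _ _) hE1 (norm_nonneg _)
                (by positivity)
          _ ≤ C * εφ + δ * (M + εφ) := by
              rw [mul_one, norm_mul, norm_mul]
              exact add_le_add
                (mul_le_mul (hc j) (haa j) (norm_nonneg _) hC)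
                (mul_le_mul (hcc j) ha' (norm_nonneg _) hδ)
      have hsub : ‖c j * a j * Complex.exp (l j * t)
            - c' j * a' j * Complex.exp (l' j * t)‖
          ≤ ‖c j * a j * (Complex.exp (l j * t) - Complex.exp (l' j * t))‖
            + ‖(c j * (a j - a' j) + (c j - c' j) * a' j) * Complex.exp (l' j * t)‖ := by
        rw [split]
        exact norm_add_le _ _
      have hpos1 : 0 ≤ C * M * Real.exp (-μ * t) := by positivity
      have hpos2 : 0 ≤ (C + δ) * (M + εφ) * Real.exp (-μ' * t) := by positivity
      rw [hB]; linarith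
  calc ‖∑ j, c j * a j * Complex.exp (l j * t)
        - ∑ j, c' j * a' j * Complex.exp (l' j * t)‖
      = ‖∑ j, (c j * a j * Complex.exp (l j * t)
        - c' j * a' j * Complex.exp (l' j * t))‖ := by rw [Finset.sum_sub_distrib]
    _ ≤ ∑ j, ‖c j * a j * Complex.exp (l j * t)
        - c' j * a' j * Complex.exp (l' j * t)‖ := norm_sum_le _ _
    _ ≤ ∑ _j : Fin (N + 1), B := Finset.sum_le_sum (fun j _ => key j)
    _ = (N + 1) * B := by simp [Finset.sum_const, mul_comm]
    _ = _ := by rw [hB]; push_cast; ring
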